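/- Let m be a positive integer, N an integer, and let (c_j)_{j∈ℕ} be a sequence in ℤ^m with c_j(i) ≥ −N for all j and i. For each j set H_j = { t ∈ ℝ^m : t(i) ≥ 0 for all i, Σᵢ t(i) = 1, and Σᵢ t(i)·c_j(i) ≥ 0 }. Then there exists a finite subset S ⊆ ℕ such that ⋂_{j∈ℕ} H_j = ⋂_{j∈S} H_j. -/

import Mathlib

/-- Stabilization of countably many rational half-space conditions on the simplex:
the intersection of all `H j` equals a finite subintersection. -/
theorem stmt_4 (m : ℕ) (hm : 0 < m) (N : ℤ) (c : ℕ → Fin m → ℤ)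
    (hbdd : ∀ j i, -N ≤ c j i)
    (H : ℕ → Set (Fin m → ℝ))
    (hH : ∀ j, H j = {t : Fin m → ℝ | (∀ i, 0 ≤ t i) ∧ (∑ i, t i) = 1 ∧
      0 ≤ ∑ i, t i * (c j i : ℝ)}) :
    ∃ S : Finset ℕ, (⋂ j : ℕ, H j) = ⋂ j ∈ S, H j := by
  -- Key claim: some finite S dominates all indices
  have key : ∃ S : Finset ℕ, ∀ j, ∃ s ∈ S, ∀ i, c s i ≤ c j i := by
    by_contra hcon
    push_neg at hcon
    -- for each finite S, pick a witness not dominated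
    have h : ∀ S : Finset ℕ, ∃ j, ∀ s ∈ S, ∃ i, ¬ c s i ≤ c j i := by
      intro S
      obtain ⟨j, hj⟩ := hcon S
      exact ⟨j, fun s hs => (hj s hs).imp fun i h => not_le.mpr h⟩
    choose w hw using h
    -- build a bad sequence
    let F : ℕ → Finset ℕ := fun n => Nat.rec ∅ (fun _ S => insert (w S) S) n
    have hFmono : ∀ a b : ℕ, a ≤ b → F a ⊆ F b := by
      intro a b hab
      induction b with
      | zero => simp [Nat.le_zero.mp hab] 
      | succ b ih =>
        rcases Nat.lt_or_ge a (b+1) with h1 | h1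
        · exact (ih (Nat.lt_succ_iff.mp h1)).trans (Finset.subset_insert _ _)
        · have : a = b + 1 := le_antisymm hab h1
          simp [this]
    let f : ℕ → ℕ := fun n => w (F n)
    have hbad : ∀ a b : ℕ, a < b → ∃ i, ¬ c (f a) i ≤ c (f b) i := by
      intro a b hab
      have hmem : f a ∈ F b := by
        have : f a ∈ F (a + 1) := Finset.mem_insert_self _ _
        exact hFmono (a+1) b hab this
      exact hw (F b) (f a) hmem
    -- Dickson's lemma on shifted nonneg integer vectors
    have hpwo : @WellQuasiOrdered (Fin m → ℕ) (· ≤ ·) := wellQuasiOrdered_le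
    obtain ⟨a, b, hab, hle⟩ := hpwo (fun n i => (c (f n) i + N).toNat)
    obtain ⟨i, hi⟩ := hbad a b hab
    apply hi
    have hle' := hle i
    have ha : (0:ℤ) ≤ c (f a) i + N := by linarith [hbdd (f a) i]
    have hb : (0:ℤ) ≤ c (f b) i + N := by linarith [hbdd (f b) i]
    dsimp only at hle'
    omega
  obtain ⟨S, hS⟩ := key
  refine ⟨S, le_antisymm ?_ ?_⟩
  · exact Set.iInter_mono' (fun j => ⟨j, le_refl _⟩) |>.trans (by
      intro t ht
      simp only [Set.mem_iInter] at ht ⊢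
      intro j hj
      exact ht j)
  · intro t ht
    simp only [Set.mem_iInter] at ht ⊢
    intro j
    obtain ⟨s, hsS, hsle⟩ := hS j
    have hts := ht s hsS
    rw [hH s] at hts
    rw [hH j]
    obtain ⟨hpos, hsum, hdot⟩ := hts
    refine ⟨hpos, hsum, le_trans hdot ?_⟩
    apply Finset.sum_le_sum
    intro i _
    have : (c s i : ℝ) ≤ (c j i : ℝ) := by exact_mod_cast hsle i
    exact mul_le_mul_of_nonneg_left this (hpos i)
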